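/- Let s > 1 be real, set l = √(s² − 1), θ = π − arctan l, α = π − 2·arctan l, and let φ_s = ψ ∘ g ∘ f be the conformal map of D_s = {z ∈ ℂ : Im z > 0, |z − i| < s} onto the upper half-plane fixing 0 and sending i to i, where f(z) = (l + z)/(l − z), g(z) = exp((π/θ)·Log z) − 1, x + iy = e^{iπα/θ} − 1, and ψ(z) = y·z/(x² + y² − x·z). Then |φ_s′(0)| = π·sin(πα/θ)/(l·θ·(1 − cos(πα/θ))) and |φ_s′(i)| = 2πl/(θ·sin(πα/θ)·(l² + 1)). -/

import Mathlib

set_option maxHeartbeats 1000000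

/-- For real `s > 1`, with `l = √(s² − 1)`, `θ = π − arctan l`,
`α = π − 2·arctan l`, and `φ_s = ψ ∘ g ∘ f` as in the paper (where
`f(z) = (l + z)/(l − z)`, `g(z) = exp((π/θ)·Log z) − 1`,
`x + iy = e^{iπα/θ} − 1`, `ψ(z) = y·z/(x² + y² − x·z)`), we have
`|φ_s′(0)| = π·sin(πα/θ)/(l·θ·(1 − cos(πα/θ)))` and
`|φ_s′(i)| = 2πl/(θ·sin(πα/θ)·(l² + 1))`. -/
theorem stmt_13 (s l θ α x y : ℝ) (hs : 1 < s)
    (hl : l = Real.sqrt (s ^ 2 - 1))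
    (hθ : θ = Real.pi - Real.arctan l)
    (hα : α = Real.pi - 2 * Real.arctan l)
    (f g ψ : ℂ → ℂ)
    (hf : ∀ z : ℂ, f z = ((l : ℂ) + z) / ((l : ℂ) - z))
    (hg : ∀ z : ℂ, g z =
      Complex.exp (((Real.pi / θ : ℝ) : ℂ) * Complex.log z) - 1)
    (hxy : (x : ℂ) + (y : ℂ) * Complex.I =
      Complex.exp (((Real.pi * α / θ : ℝ) : ℂ) * Complex.I) - 1)
    (hψ : ∀ z : ℂ, ψ z =
      (y : ℂ) * z / ((x : ℂ) ^ 2 + (y : ℂ) ^ 2 - (x : ℂ) * z)) :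
    ‖deriv (ψ ∘ g ∘ f) 0‖ =
      Real.pi * Real.sin (Real.pi * α / θ) /
        (l * θ * (1 - Real.cos (Real.pi * α / θ))) ∧
    ‖deriv (ψ ∘ g ∘ f) Complex.I‖ =
      2 * Real.pi * l / (θ * Real.sin (Real.pi * α / θ) * (l ^ 2 + 1)) := by
  have hf' : f = fun z : ℂ => ((l : ℂ) + z) / ((l : ℂ) - z) := funext hf
  have hg' : g = fun z : ℂ =>
      Complex.exp (((Real.pi / θ : ℝ) : ℂ) * Complex.log z) - 1 := funext hg
  have hψ' : ψ = fun z : ℂ =>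
      (y : ℂ) * z / ((x : ℂ) ^ 2 + (y : ℂ) ^ 2 - (x : ℂ) * z) := funext hψ
  subst hf' hg' hψ'
  -- real facts
  have hl0 : 0 < l := by rw [hl]; apply Real.sqrt_pos.2; nlinarith
  have ha0 : 0 < Real.arctan l := by
    rw [← Real.arctan_zero]; exact Real.arctan_strictMono hl0
  have ha2 : Real.arctan l < Real.pi / 2 := Real.arctan_lt_pi_div_two l
  have hθ0 : 0 < θ := by rw [hθ]; linarith [Real.pi_pos]
  have hα0 : 0 < α := by rw [hα]; linarith
  have hαθ : α < θ := by rw [hα, hθ]; linarith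
  set β := Real.pi * α / θ with hβ
  have hβ0 : 0 < β := by rw [hβ]; positivity
  have hβπ : β < Real.pi := by
    rw [hβ, div_lt_iff₀ hθ0]; nlinarith [Real.pi_pos]
  have hx : x = Real.cos β - 1 := by
    have := congrArg Complex.re hxy
    simpa [Complex.exp_ofReal_mul_I_re] using this
  have hy : y = Real.sin β := by
    have := congrArg Complex.im hxy
    simpa [Complex.exp_ofReal_mul_I_im] using this
  have hy0 : 0 < y := by rw [hy]; exact Real.sin_pos_of_pos_of_lt_pi hβ0 hβπ
  have hA : x ^ 2 + y ^ 2 = 2 * (1 - Real.cos β) := by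
    rw [hx, hy]; nlinarith [Real.sin_sq_add_cos_sq β]
  have hA0 : 0 < x ^ 2 + y ^ 2 := by nlinarith [sq_nonneg x, pow_pos hy0 2]
  have hcosα : Real.cos α = (l^2-1)/(l^2+1) := by
    have h1 : Real.cos (Real.arctan l) = 1 / Real.sqrt (1 + l ^ 2) := Real.cos_arctan l
    have h2 : Real.sqrt (1 + l^2) ^ 2 = 1 + l^2 := Real.sq_sqrt (by positivity)
    have h3 : (0:ℝ) < 1 + l^2 := by positivity
    rw [hα, Real.cos_pi_sub, Real.cos_two_mul, h1]
    field_simp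
    nlinarith [h2]
  have hsinα : Real.sin α = 2*l/(l^2+1) := by
    have h1 : Real.cos (Real.arctan l) = 1 / Real.sqrt (1 + l ^ 2) := Real.cos_arctan l
    have h1' : Real.sin (Real.arctan l) = l / Real.sqrt (1 + l ^ 2) := Real.sin_arctan l
    have h2 : Real.sqrt (1 + l^2) ^ 2 = 1 + l^2 := Real.sq_sqrt (by positivity)
    have h4 : Real.sqrt (1+l^2) ≠ 0 := by positivity
    rw [hα, Real.sin_pi_sub, Real.sin_two_mul, h1, h1']
    field_simp
    nlinarith [h2]
  -- derivative lemmas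
  have Hf : ∀ z : ℂ, (l:ℂ) - z ≠ 0 →
      HasDerivAt (fun z : ℂ => ((l:ℂ) + z) / ((l:ℂ) - z)) (2*l / ((l:ℂ)-z)^2) z := by
    intro z hz
    have h1 : HasDerivAt (fun z : ℂ => (l:ℂ) + z) 1 z := (hasDerivAt_id z).const_add _
    have h2 : HasDerivAt (fun z : ℂ => (l:ℂ) - z) (-1) z := (hasDerivAt_id z).const_sub _
    have := h1.div h2 hz
    exact this.congr_deriv (by ring)
  have Hg : ∀ z : ℂ, z ∈ Complex.slitPlane →
      HasDerivAt (fun z : ℂ => Complex.exp (((Real.pi / θ : ℝ) : ℂ) * Complex.log z) - 1)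
        (Complex.exp (((Real.pi / θ : ℝ) : ℂ) * Complex.log z) * ((Real.pi / θ : ℝ) : ℂ) / z) z := by
    intro z hz
    have h1 : HasDerivAt (fun z : ℂ => ((Real.pi / θ : ℝ) : ℂ) * Complex.log z)
        (((Real.pi / θ : ℝ) : ℂ) * z⁻¹) z := (Complex.hasDerivAt_log hz).const_mul _
    have h2 := h1.cexp.sub_const 1
    exact h2.congr_deriv (by ring)
  have Hψ : ∀ z : ℂ, ((x:ℂ)^2+(y:ℂ)^2 - (x:ℂ)*z) ≠ 0 →
      HasDerivAt (fun z : ℂ => (y:ℂ)*z/((x:ℂ)^2+(y:ℂ)^2 - (x:ℂ)*z))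
        ((y:ℂ)*((x:ℂ)^2+(y:ℂ)^2)/((x:ℂ)^2+(y:ℂ)^2 - (x:ℂ)*z)^2) z := by
    intro z hz
    have h1 : HasDerivAt (fun z : ℂ => (y:ℂ)*z) (y:ℂ) z := by
      simpa using (hasDerivAt_id z).const_mul (y:ℂ)
    have h2 : HasDerivAt (fun z : ℂ => (x:ℂ)^2+(y:ℂ)^2 - (x:ℂ)*z) (-(x:ℂ)) z := by
      simpa using ((hasDerivAt_id z).const_mul (x:ℂ)).const_sub ((x:ℂ)^2+(y:ℂ)^2)
    have := h1.div h2 hz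
    exact this.congr_deriv (by ring)
  have hlC : ((l:ℂ)) ≠ 0 := by exact_mod_cast hl0.ne'
  have hACcast : (x:ℂ)^2+(y:ℂ)^2 = ((x^2+y^2 : ℝ) : ℂ) := by push_cast; ring
  have hACne : ((x:ℂ)^2+(y:ℂ)^2) ≠ 0 := by
    rw [hACcast]; exact_mod_cast hA0.ne'
  constructor
  · -- at 0
    have hfd0 := Hf 0 (by simpa using hlC)
    have e0 : ((l:ℂ)+0)/((l:ℂ)-0) = 1 := by rw [add_zero, sub_zero, div_self hlC]
    have hgd0 : HasDerivAt
        (fun z : ℂ => Complex.exp (((Real.pi / θ : ℝ) : ℂ) * Complex.log z) - 1)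
        (((Real.pi / θ : ℝ) : ℂ)) (((l:ℂ)+0)/((l:ℂ)-0)) := by
      rw [e0]
      simpa [Complex.log_one] using Hg 1 (by simp [Complex.mem_slitPlane_iff])
    have hgf0 := hgd0.comp 0 hfd0
    have egf0 : ((fun z : ℂ => Complex.exp (((Real.pi / θ : ℝ) : ℂ) * Complex.log z) - 1) ∘
        (fun z : ℂ => ((l:ℂ)+z)/((l:ℂ)-z))) 0 = 0 := by
      simp only [Function.comp_apply, e0, Complex.log_one, mul_zero, Complex.exp_zero,
        sub_self]
    have hψd0 : HasDerivAt
        (fun z : ℂ => (y:ℂ)*z/((x:ℂ)^2+(y:ℂ)^2 - (x:ℂ)*z))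
        ((y:ℂ)*((x:ℂ)^2+(y:ℂ)^2)/((x:ℂ)^2+(y:ℂ)^2 - (x:ℂ)*0)^2)
        (((fun z : ℂ => Complex.exp (((Real.pi / θ : ℝ) : ℂ) * Complex.log z) - 1) ∘
        (fun z : ℂ => ((l:ℂ)+z)/((l:ℂ)-z))) 0) := by
      rw [egf0]
      exact Hψ 0 (by simpa using hACne)
    have htot0 := hψd0.comp 0 hgf0
    rw [htot0.deriv]
    have hval : (y:ℂ)*((x:ℂ)^2+(y:ℂ)^2)/((x:ℂ)^2+(y:ℂ)^2 - (x:ℂ)*0)^2 *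
        (((Real.pi / θ : ℝ) : ℂ) * (2*l/((l:ℂ)-0)^2))
        = ((2*Real.pi*y/(θ*(l*(x^2+y^2))) : ℝ) : ℂ) := by
      have hθC : ((θ:ℝ):ℂ) ≠ 0 := by exact_mod_cast hθ0.ne'
      push_cast
      field_simp
      simp only [mul_zero, sub_zero]
      field_simp
    rw [hval, Complex.norm_real, Real.norm_eq_abs, abs_of_nonneg (by positivity)]
    rw [← hy]
    have h1c : 1 - Real.cos β = (x^2+y^2)/2 := by rw [hA]; ring
    rw [h1c]
    field_simp [hθ0.ne', hl0.ne', hA0.ne']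
  · -- at I
    have hliC : (l:ℂ) - Complex.I ≠ 0 := by
      intro h
      have := congrArg Complex.im h
      simp at this
    have hl2C : ((l:ℂ)^2 + 1) ≠ 0 := by
      have e : ((l:ℂ)^2 + 1) = ((l^2+1 : ℝ) : ℂ) := by push_cast; ring
      rw [e]
      exact_mod_cast (by positivity : (l^2+1:ℝ) ≠ 0)
    have hfdI := Hf Complex.I hliC
    have hfi : ((l:ℂ)+Complex.I)/((l:ℂ)-Complex.I) = Complex.exp ((α:ℂ) * Complex.I) := by
      rw [Complex.exp_mul_I, ← Complex.ofReal_cos, ← Complex.ofReal_sin, hcosα, hsinα,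
        div_eq_iff hliC]
      push_cast
      field_simp
      linear_combination (2*(l:ℂ)) * Complex.I_sq
    have him : ((α:ℂ) * Complex.I).im = α := by simp
    have hlog : Complex.log (Complex.exp ((α:ℂ) * Complex.I)) = (α:ℂ) * Complex.I :=
      Complex.log_exp (by rw [him]; linarith [Real.pi_pos]) (by rw [him]; linarith)
    have hslit : ((l:ℂ)+Complex.I)/((l:ℂ)-Complex.I) ∈ Complex.slitPlane := by
      rw [hfi, Complex.mem_slitPlane_iff]
      right
      rw [Complex.exp_ofReal_mul_I_im, hsinα]
      positivity
    have hgdI := Hg _ hslit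
    have hgfI := hgdI.comp Complex.I hfdI
    have hcα : ((Real.pi / θ : ℝ) : ℂ) * ((α:ℂ)*Complex.I) = ((β:ℝ):ℂ) * Complex.I := by
      rw [hβ]
      push_cast
      field_simp
    have hlogv : Complex.log (((l:ℂ)+Complex.I)/((l:ℂ)-Complex.I)) = (α:ℂ)*Complex.I := by
      rw [hfi, hlog]
    have egfI : ((fun z : ℂ => Complex.exp (((Real.pi / θ : ℝ) : ℂ) * Complex.log z) - 1) ∘
        (fun z : ℂ => ((l:ℂ)+z)/((l:ℂ)-z))) Complex.I = (x:ℂ) + (y:ℂ)*Complex.I := by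
      simp only [Function.comp_apply]
      rw [hlogv, hcα]
      exact hxy.symm
    have hDval : ((x:ℂ)^2+(y:ℂ)^2 - (x:ℂ)*((x:ℂ)+(y:ℂ)*Complex.I))
        = ((y^2:ℝ):ℂ) + ((-(x*y):ℝ):ℂ)*Complex.I := by push_cast; ring
    have hDabs : ‖(x:ℂ)^2+(y:ℂ)^2 - (x:ℂ)*((x:ℂ)+(y:ℂ)*Complex.I)‖ ^ 2
        = y^2*(x^2+y^2) := by
      rw [hDval, Complex.sq_norm, Complex.normSq_add_mul_I]
      ring
    have hdenI : ((x:ℂ)^2+(y:ℂ)^2 - (x:ℂ)*((x:ℂ)+(y:ℂ)*Complex.I)) ≠ 0 := by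
      intro h0
      rw [h0, norm_zero] at hDabs
      norm_num at hDabs
      rcases hDabs with h | h
      · exact hy0.ne' h
      · exact hA0.ne' h
    have hψdI : HasDerivAt
        (fun z : ℂ => (y:ℂ)*z/((x:ℂ)^2+(y:ℂ)^2 - (x:ℂ)*z))
        ((y:ℂ)*((x:ℂ)^2+(y:ℂ)^2)/((x:ℂ)^2+(y:ℂ)^2 - (x:ℂ)*((x:ℂ)+(y:ℂ)*Complex.I))^2)
        (((fun z : ℂ => Complex.exp (((Real.pi / θ : ℝ) : ℂ) * Complex.log z) - 1) ∘
        (fun z : ℂ => ((l:ℂ)+z)/((l:ℂ)-z))) Complex.I) := by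
      rw [egfI]
      exact Hψ _ hdenI
    have htotI := hψdI.comp Complex.I hgfI
    rw [htotI.deriv]
    -- now compute the absolute value
    have hLabs : ‖(l:ℂ) - Complex.I‖ ^ 2 = l^2+1 := by
      rw [Complex.sq_norm, Complex.normSq_apply]
      simp
      ring
    have hLne : ‖(l:ℂ) - Complex.I‖ ≠ 0 :=
      norm_ne_zero_iff.mpr hliC
    have habs_eq : ‖(l:ℂ)+Complex.I‖ = ‖(l:ℂ)-Complex.I‖ := by
      rw [Complex.norm_def, Complex.norm_def]
      congr 1
      simp [Complex.normSq_apply]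
    simp only [norm_mul, norm_div, norm_pow]
    rw [hlogv, hcα, Complex.norm_exp_ofReal_mul_I, hDabs, hLabs, habs_eq,
      div_self hLne, hACcast]
    simp only [Complex.norm_real, Real.norm_eq_abs, Complex.norm_two]
    rw [abs_of_nonneg hy0.le, abs_of_nonneg hA0.le, abs_of_nonneg hl0.le,
      abs_of_nonneg (by positivity : (0:ℝ) ≤ Real.pi / θ), ← hy, div_one]
    field_simp [hθ0.ne', hy0.ne', hA0.ne']
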